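/- Let H be a complex Hilbert space, K₁ : ℂ → H a bounded operator, A : H → H a bounded operator, α ∈ (0, π) with α ≠ π/2, and let z ∈ ℂ be such that A − zI is invertible. Define the block operators on H × ℂ by M̂(x, c) = (A x + 2i·c·K₁(1), (tan α + i)·c) and F̂(x, c) = (x, 0), and K : ℂ → H × ℂ by K c = (K₁ c, c). Then M̂ − zF̂ is invertible and the scalar transfer function satisfies 1 − 2i·⟨(M̂ − zF̂)⁻¹ K(1), K(1)⟩ = (1 − 2i·⟨(A − zI)⁻¹ K₁(1), K₁(1)⟩)·(−e^{2iα}), where ⟨·,·⟩ is the inner product (conjugate-linear in the second slot as appropriate so that the expression equals K*(M̂ − zF̂)⁻¹K applied to 1). -/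

import Mathlib

open ContinuousLinearMap
open scoped InnerProductSpace

/-- Coupling a scalar-input `L`-system with the controller `Θ₀,α`
(state operator `tan α + i`, `F = 0`, `K = 1`, `J = 1`) multiplies the
transfer function by `-e^{2iα}`: the block operator `M̂ - zF̂` with
`M̂(x, c) = (Ax + 2ic·K₁(1), (tan α + i)c)` and `F̂(x, c) = (x, 0)` is
invertible, and for its inverse `R`,
`1 - 2i⟨K(1), R(K(1))⟩ = (1 - 2i⟨K₁(1), (A - zI)⁻¹K₁(1)⟩)·(-e^{2iα})`
(the inner product is conjugate-linear in the first slot, so that these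
scalars equal `K*(M̂ - zF̂)⁻¹K` and `K₁*(A - zI)⁻¹K₁` applied to `1`). -/
theorem stmt_17
    {H : Type*} [NormedAddCommGroup H] [InnerProductSpace ℂ H] [CompleteSpace H]
    (K₁ : ℂ →L[ℂ] H) (A : H →L[ℂ] H)
    (α : ℝ) (hα : α ∈ Set.Ioo 0 Real.pi) (hα2 : α ≠ Real.pi / 2)
    (z : ℂ) (Ainv : H →L[ℂ] H)
    (hAinv₁ : (A - z • 1) ∘L Ainv = 1) (hAinv₂ : Ainv ∘L (A - z • 1) = 1)
    (Mhat Fhat : WithLp 2 (H × ℂ) →L[ℂ] WithLp 2 (H × ℂ))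
    (hMhat : ∀ (x : H) (c : ℂ),
      Mhat ((WithLp.equiv 2 (H × ℂ)).symm (x, c)) =
        (WithLp.equiv 2 (H × ℂ)).symm
          (A x + (2 * Complex.I * c) • K₁ 1, ((Real.tan α : ℂ) + Complex.I) * c))
    (hFhat : ∀ (x : H) (c : ℂ),
      Fhat ((WithLp.equiv 2 (H × ℂ)).symm (x, c)) =
        (WithLp.equiv 2 (H × ℂ)).symm (x, 0))
    (K : ℂ →L[ℂ] WithLp 2 (H × ℂ))
    (hK : ∀ c : ℂ, K c = (WithLp.equiv 2 (H × ℂ)).symm (K₁ c, c)) :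
    IsUnit (Mhat - z • Fhat) ∧
    ∀ R : WithLp 2 (H × ℂ) →L[ℂ] WithLp 2 (H × ℂ),
      (Mhat - z • Fhat) ∘L R = 1 → R ∘L (Mhat - z • Fhat) = 1 →
      1 - 2 * Complex.I * ⟪K 1, R (K 1)⟫_ℂ =
        (1 - 2 * Complex.I * ⟪K₁ 1, Ainv (K₁ 1)⟫_ℂ) *
          (-Complex.exp (2 * Complex.I * (α : ℂ))) := by
  -- notation
  set τ : ℂ := (Real.tan α : ℂ) + Complex.I with hτdef
  -- cos α ≠ 0
  have hc : Real.cos α ≠ 0 := by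
    intro h
    rw [Real.cos_eq_zero_iff] at h
    obtain ⟨n, hn⟩ := h
    obtain ⟨h0, h1⟩ := hα
    have hπ := Real.pi_pos
    apply hα2
    have hb1 : (0:ℝ) < 2*(n:ℝ)+1 := by nlinarith
    have hb2 : 2*(n:ℝ)+1 < 2 := by nlinarith
    have hn0 : n = 0 := by
      have c1 : (0:ℤ) < 2*n+1 := by exact_mod_cast hb1
      have c2 : (2*n+1 : ℤ) < 2 := by exact_mod_cast hb2
      omega
    rw [hn0] at hn; push_cast at hn; linarith
  -- τ ≠ 0
  have hτ : τ ≠ 0 := by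
    intro h
    have := congrArg Complex.im h
    simp [hτdef] at this
  -- key scalar identity
  have key : τ * (-Complex.exp (2 * Complex.I * (α : ℂ))) = τ - 2 * Complex.I := by
    have hc' : Complex.cos (α:ℂ) ≠ 0 := by
      rw [← Complex.ofReal_cos]; exact_mod_cast hc
    have h1 := Complex.sin_sq_add_cos_sq (α:ℂ)
    have he : Complex.exp (2 * Complex.I * (α : ℂ)) =
        Complex.cos (2*(α:ℂ)) + Complex.sin (2*(α:ℂ)) * Complex.I := by
      rw [show 2 * Complex.I * (α : ℂ) = (2*(α:ℂ)) * Complex.I by ring, Complex.exp_mul_I]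
    rw [hτdef, he, Complex.ofReal_tan, Complex.tan_eq_sin_div_cos,
      Complex.cos_two_mul, Complex.sin_two_mul]
    field_simp
    linear_combination (-2*Complex.I*Complex.cos (α:ℂ)) * h1 +
      (-2*Complex.sin (α:ℂ)*Complex.cos (α:ℂ)^2) * Complex.I_sq
  have hE : -Complex.exp (2 * Complex.I * (α : ℂ)) = (τ - 2 * Complex.I) / τ := by
    rw [eq_div_iff hτ, ← key]; ring
  -- action of B := Mhat - z • Fhat
  have hB : ∀ v : WithLp 2 (H × ℂ), (Mhat - z • Fhat) v =
      (WithLp.equiv 2 (H × ℂ)).symm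
        (A v.ofLp.1 - z • v.ofLp.1 + (2 * Complex.I * v.ofLp.2) • K₁ 1, τ * v.ofLp.2) := by
    intro v
    have h1 := hMhat v.ofLp.1 v.ofLp.2
    have h2 := hFhat v.ofLp.1 v.ofLp.2
    have hv : ((WithLp.equiv 2 (H × ℂ)).symm (v.ofLp.1, v.ofLp.2)) = v := rfl
    rw [hv] at h1 h2
    rw [ContinuousLinearMap.sub_apply, ContinuousLinearMap.smul_apply, h1, h2,
      WithLp.equiv_symm_apply, ← WithLp.toLp_smul, ← WithLp.toLp_sub]
    congr 1
    simp [Prod.smul_mk, Prod.mk_sub_mk]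
    abel
  -- pointwise inverses of A - z • 1
  have hA1 : ∀ w, (A - z • (1 : H →L[ℂ] H)) (Ainv w) = w := by
    intro w
    have := ContinuousLinearMap.ext_iff.1 hAinv₁ w
    simpa using this
  have hA2 : ∀ w, Ainv ((A - z • (1 : H →L[ℂ] H)) w) = w := by
    intro w
    have := ContinuousLinearMap.ext_iff.1 hAinv₂ w
    simpa using this
  -- explicit inverse
  set S : (H × ℂ) →L[ℂ] H × ℂ :=
    ((Ainv ∘L ContinuousLinearMap.fst ℂ H ℂ) +
      (ContinuousLinearMap.snd ℂ H ℂ).smulRight (((-2) * Complex.I / τ) • Ainv (K₁ 1))).prod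
      (τ⁻¹ • ContinuousLinearMap.snd ℂ H ℂ) with hSdef
  set e : WithLp 2 (H × ℂ) ≃L[ℂ] H × ℂ := WithLp.prodContinuousLinearEquiv 2 ℂ H ℂ with hedef
  set R₀ : WithLp 2 (H × ℂ) →L[ℂ] WithLp 2 (H × ℂ) :=
    (e.symm : (H × ℂ) →L[ℂ] WithLp 2 (H × ℂ)) ∘L S ∘L (e : WithLp 2 (H × ℂ) →L[ℂ] H × ℂ)
    with hRdef
  have hR₀apply : ∀ v : WithLp 2 (H × ℂ), R₀ v =
      (WithLp.equiv 2 (H × ℂ)).symm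
        (Ainv v.ofLp.1 + v.ofLp.2 • (((-2) * Complex.I / τ) • Ainv (K₁ 1)), τ⁻¹ * v.ofLp.2) := by
    intro v; rfl
  have hsub1 : ∀ (x : H) (c : ℂ), ((WithLp.equiv 2 (H × ℂ)).symm (x, c)).ofLp.1 = x := fun _ _ => rfl
  have hsub2 : ∀ (x : H) (c : ℂ), ((WithLp.equiv 2 (H × ℂ)).symm (x, c)).ofLp.2 = c := fun _ _ => rfl
  have hBR₀ : (Mhat - z • Fhat) ∘L R₀ = 1 := by
    ext v
    rw [ContinuousLinearMap.comp_apply, hR₀apply, hB, hsub1, hsub2,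
      ContinuousLinearMap.one_apply]
    have hv : ((WithLp.equiv 2 (H × ℂ)).symm (v.ofLp.1, v.ofLp.2)) = v := rfl
    conv_rhs => rw [← hv]
    congr 1
    refine Prod.ext ?_ ?_
    · show A _ - z • _ + _ = v.ofLp.1
      have : A (Ainv v.ofLp.1 + v.ofLp.2 • (((-2) * Complex.I / τ) • Ainv (K₁ 1))) -
          z • (Ainv v.ofLp.1 + v.ofLp.2 • (((-2) * Complex.I / τ) • Ainv (K₁ 1))) =
          (A - z • (1 : H →L[ℂ] H)) (Ainv v.ofLp.1) +
            (v.ofLp.2 * ((-2) * Complex.I / τ)) • ((A - z • (1 : H →L[ℂ] H)) (Ainv (K₁ 1))) := by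
        simp [ContinuousLinearMap.sub_apply, ContinuousLinearMap.smul_apply, smul_smul,
          map_add, map_smul, smul_sub]
        module
      rw [this, hA1, hA1]
      rw [show (2 : ℂ) * Complex.I * (τ⁻¹ * v.ofLp.2) = -(v.ofLp.2 * ((-2) * Complex.I / τ)) by
        field_simp]
      module
    · show τ * (τ⁻¹ * v.ofLp.2) = v.ofLp.2
      field_simp
  have hR₀B : R₀ ∘L (Mhat - z • Fhat) = 1 := by
    ext v
    rw [ContinuousLinearMap.comp_apply, hB, hR₀apply, hsub1, hsub2,
      ContinuousLinearMap.one_apply]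
    have hv : ((WithLp.equiv 2 (H × ℂ)).symm (v.ofLp.1, v.ofLp.2)) = v := rfl
    conv_rhs => rw [← hv]
    congr 1
    refine Prod.ext ?_ ?_
    · show Ainv _ + _ = v.ofLp.1
      have h3 : A v.ofLp.1 - z • v.ofLp.1 + (2 * Complex.I * v.ofLp.2) • K₁ 1 =
          (A - z • (1 : H →L[ℂ] H)) v.ofLp.1 + (2 * Complex.I * v.ofLp.2) • K₁ 1 := by
        simp [ContinuousLinearMap.sub_apply, ContinuousLinearMap.smul_apply]
      rw [h3, map_add, map_smul, hA2, smul_smul]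
      rw [show (τ * v.ofLp.2) * ((-2) * Complex.I / τ) = -(2 * Complex.I * v.ofLp.2) by
        field_simp]
      module
    · show τ⁻¹ * (τ * v.ofLp.2) = v.ofLp.2
      field_simp
  refine ⟨isUnit_iff_exists.mpr ⟨R₀, hBR₀, hR₀B⟩, ?_⟩
  intro R hR1 hR2
  -- the vector v₀ with B v₀ = K 1
  set v₀ : WithLp 2 (H × ℂ) :=
    (WithLp.equiv 2 (H × ℂ)).symm (((τ - 2 * Complex.I) / τ) • Ainv (K₁ 1), τ⁻¹) with hv₀
  have hBv₀ : (Mhat - z • Fhat) v₀ = K 1 := by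
    rw [hK, hB, hv₀, hsub1, hsub2]
    congr 1
    refine Prod.ext ?_ ?_
    · show A _ - z • _ + _ = K₁ 1
      have : A (((τ - 2 * Complex.I) / τ) • Ainv (K₁ 1)) -
          z • (((τ - 2 * Complex.I) / τ) • Ainv (K₁ 1)) =
          ((τ - 2 * Complex.I) / τ) • ((A - z • (1 : H →L[ℂ] H)) (Ainv (K₁ 1))) := by
        simp [ContinuousLinearMap.sub_apply, ContinuousLinearMap.smul_apply, map_smul, smul_sub]
        module
      rw [this, hA1]
      rw [show (2 : ℂ) * Complex.I * τ⁻¹ = 1 - (τ - 2 * Complex.I) / τ by field_simp; ring]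
      module
    · show τ * τ⁻¹ = 1
      field_simp
  have hRK : R (K 1) = v₀ := by
    calc R (K 1) = R ((Mhat - z • Fhat) v₀) := by rw [hBv₀]
    _ = (R ∘L (Mhat - z • Fhat)) v₀ := rfl
    _ = v₀ := by rw [hR2]; rfl
  rw [hRK, hK, hv₀]
  rw [show (⟪(WithLp.equiv 2 (H × ℂ)).symm (K₁ 1, (1:ℂ)),
      (WithLp.equiv 2 (H × ℂ)).symm (((τ - 2 * Complex.I) / τ) • Ainv (K₁ 1), τ⁻¹)⟫_ℂ) =
      ((τ - 2 * Complex.I) / τ) * ⟪K₁ 1, Ainv (K₁ 1)⟫_ℂ + τ⁻¹ by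
    simp [WithLp.prod_inner_apply, inner_smul_right, RCLike.inner_apply]]
  rw [hE]
  set w : ℂ := ⟪K₁ 1, Ainv (K₁ 1)⟫_ℂ
  field_simp
  ring
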